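/- Let 1 ≤ k ≤ n−1 and let a ∈ M_n(ℂ) be a matrix of rank k. Then the restriction of Γ_k : x ↦ rng(x) to the Green class R_a (with subspace topology) is a continuous open surjection from R_a onto 𝖦_k, and the restriction of Δ_k : x ↦ nul(x) to the Green class L_a is a continuous open surjection from L_a onto 𝖦_{n−k}. -/

import Mathlib

open Matrix

/-- `Mn n` is the multiplicative monoid of `n × n` complex matrices. -/
abbrev Mn (n : ℕ) : Type := Matrix (Fin n) (Fin n) ℂ

/-- A subset of `Mn n` is algebraic if it is the common zero set of a family of
polynomials in the `n²` matrix entries. -/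
def IsAlgebraicMatrixSet {n : ℕ} (X : Set (Mn n)) : Prop :=
  ∃ s : Set (MvPolynomial (Fin n × Fin n) ℂ),
    X = {x | ∀ p ∈ s, MvPolynomial.eval (fun ij => x ij.1 ij.2) p = 0}

/-- `M` is a regular irreducible algebraic monoid in `Mn n`. -/
structure IsRegIrrAlgMonoid {n : ℕ} (M : Set (Mn n)) : Prop where
  one_mem : (1 : Mn n) ∈ M
  mul_mem : ∀ a ∈ M, ∀ b ∈ M, a * b ∈ M
  algebraic : IsAlgebraicMatrixSet M
  regular : ∀ a ∈ M, ∃ x ∈ M, a * x * a = a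
  irreducible : ¬ ∃ A B : Set (Mn n), IsAlgebraicMatrixSet A ∧ IsAlgebraicMatrixSet B ∧
      A ∪ B = M ∧ A ≠ M ∧ B ≠ M

/-- The group of units of the monoid `M` (as a subset of `Mn n`). -/
def unitsOf {n : ℕ} (M : Set (Mn n)) : Set (Mn n) :=
  {u | u ∈ M ∧ ∃ v ∈ M, u * v = 1 ∧ v * u = 1}

def lSet {n : ℕ} (S : Set (Mn n)) (a : Mn n) : Set (Mn n) := {y | ∃ x ∈ S, y = x * a}
def rSet {n : ℕ} (S : Set (Mn n)) (a : Mn n) : Set (Mn n) := {y | ∃ x ∈ S, y = a * x}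
def jSet {n : ℕ} (S : Set (Mn n)) (a : Mn n) : Set (Mn n) :=
  {y | ∃ x ∈ S, ∃ z ∈ S, y = x * a * z}

/-- Green's relation 𝓛 in the monoid `S`: `a 𝓛 b` iff `Sa = Sb`. -/
def GreenL {n : ℕ} (S : Set (Mn n)) (a b : Mn n) : Prop := lSet S a = lSet S b
/-- Green's relation 𝓡 in the monoid `S`: `a 𝓡 b` iff `aS = bS`. -/
def GreenR {n : ℕ} (S : Set (Mn n)) (a b : Mn n) : Prop := rSet S a = rSet S b
/-- Green's relation 𝓓: `a 𝓓 b` iff there is `c ∈ S` with `a 𝓛 c` and `c 𝓡 b`. -/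
def GreenD {n : ℕ} (S : Set (Mn n)) (a b : Mn n) : Prop :=
  ∃ c ∈ S, GreenL S a c ∧ GreenR S c b
/-- Green's relation 𝓙: `a 𝓙 b` iff `SaS = SbS`. -/
def GreenJ {n : ℕ} (S : Set (Mn n)) (a b : Mn n) : Prop := jSet S a = jSet S b

def LClass {n : ℕ} (S : Set (Mn n)) (a : Mn n) : Set (Mn n) := {b ∈ S | GreenL S a b}
def RClass {n : ℕ} (S : Set (Mn n)) (a : Mn n) : Set (Mn n) := {b ∈ S | GreenR S a b}
def DClass {n : ℕ} (S : Set (Mn n)) (a : Mn n) : Set (Mn n) := {b ∈ S | GreenD S a b}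
def JClass {n : ℕ} (S : Set (Mn n)) (a : Mn n) : Set (Mn n) := {b ∈ S | GreenJ S a b}

/-- The set of idempotents in a subset `T`. -/
def idem {n : ℕ} (T : Set (Mn n)) : Set (Mn n) := {x ∈ T | x * x = x}

/-- `rng x` : the row space of `x`, i.e. the image of the linear map `v ↦ v ᵥ* x`
on row vectors (equivalently, the range of `xᵀ *ᵥ ·`). -/
noncomputable def rng {n : ℕ} (x : Mn n) : Submodule ℂ (Fin n → ℂ) :=
  LinearMap.range xᵀ.mulVecLin

/-- `nul x` : the left null space `{v : v ᵥ* x = 0}` of `x`. -/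
noncomputable def nul {n : ℕ} (x : Mn n) : Submodule ℂ (Fin n → ℂ) :=
  LinearMap.ker xᵀ.mulVecLin

/-- The row space of a `k × n` matrix `P`: the span of its rows, i.e. the image of
the linear map `v ↦ v ᵥ* P` (equivalently `v ↦ Pᵀ *ᵥ v`). -/
noncomputable def rowSpace {k n : ℕ} (P : Matrix (Fin k) (Fin n) ℂ) : Submodule ℂ (Fin n → ℂ) :=
  LinearMap.range Pᵀ.mulVecLin

/-- Type synonym for the submodule lattice of `ℂⁿ`; the parameter `k` records which
Grassmann quotient topology (coinduced from the rank-`k` `k × n` matrices via the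
row-space map) the type carries. -/
def GrassModK (n k : ℕ) : Type := Submodule ℂ (Fin n → ℂ)

def toGrass {n : ℕ} (k : ℕ) (W : Submodule ℂ (Fin n → ℂ)) : GrassModK n k := W

def toSubmodule {n k : ℕ} (W : GrassModK n k) : Submodule ℂ (Fin n → ℂ) := W

/-- The Grassmann (quotient) topology: coinduced from the euclidean topology on the
space `M(k,n;k)` of rank-`k` `k × n` matrices by the row-space map `q`. -/
noncomputable instance grassTop (n k : ℕ) : TopologicalSpace (GrassModK n k) :=
  TopologicalSpace.coinduced
    (fun P : {P : Matrix (Fin k) (Fin n) ℂ // P.rank = k} => toGrass k (rowSpace P.1))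
    inferInstance

/-- `𝖦_k`, the set of `k`-dimensional subspaces of `ℂⁿ` (in its Grassmann-topologised
ambient type); it carries the subspace topology, which agrees with the quotient
topology induced by `q`. -/
def GrassSet (n k : ℕ) : Set (GrassModK n k) :=
  {W | Module.finrank ℂ ↥(toSubmodule W) = k}



section AuxProofs
open Module LinearMap Set

-- 1. injectivity of mulVecLin
lemma aux_matrix_eq {p q : ℕ} {A B : Matrix (Fin p) (Fin q) ℂ}
    (h : A.mulVecLin = B.mulVecLin) : A = B := by
  rw [← Matrix.toLin'_apply', ← Matrix.toLin'_apply'] at h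
  simpa [LinearMap.toMatrix'_toLin'] using congrArg LinearMap.toMatrix' h

lemma aux_mulVecLin_toMatrix' {p q : ℕ} (f : (Fin q → ℂ) →ₗ[ℂ] (Fin p → ℂ)) :
    (LinearMap.toMatrix' f).mulVecLin = f := by
  rw [← Matrix.toLin'_apply']; exact Matrix.toLin'_toMatrix' f

-- 2. factorization through kernels
lemma aux_exists_comp_of_ker_le {p q r : ℕ}
    (f : (Fin p → ℂ) →ₗ[ℂ] (Fin q → ℂ)) (g : (Fin p → ℂ) →ₗ[ℂ] (Fin r → ℂ))
    (h : LinearMap.ker f ≤ LinearMap.ker g) :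
    ∃ h' : (Fin q → ℂ) →ₗ[ℂ] (Fin r → ℂ), g = h' ∘ₗ f := by
  obtain ⟨s, hs⟩ := f.rangeRestrict.exists_rightInverse_of_surjective
    (LinearMap.range_rangeRestrict f)
  obtain ⟨Q, hQ⟩ := (LinearMap.range f).exists_isCompl
  let π := (LinearMap.range f).linearProjOfIsCompl Q hQ
  refine ⟨g ∘ₗ s ∘ₗ π, LinearMap.ext fun v => ?_⟩
  have h1 : π (f v) = ⟨f v, LinearMap.mem_range_self f v⟩ :=
    Submodule.linearProjOfIsCompl_apply_left hQ ⟨f v, LinearMap.mem_range_self f v⟩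
  have h2 : f (s ⟨f v, LinearMap.mem_range_self f v⟩) = f v := by
    have := congrArg Subtype.val (LinearMap.congr_fun hs ⟨f v, LinearMap.mem_range_self f v⟩)
    simpa using this
  have h3 : s ⟨f v, LinearMap.mem_range_self f v⟩ - v ∈ LinearMap.ker g := by
    apply h
    simp [LinearMap.mem_ker, map_sub, h2]
  have h4 : g (s ⟨f v, LinearMap.mem_range_self f v⟩) = g v := by
    have := h3
    rw [LinearMap.mem_ker, map_sub, sub_eq_zero] at this
    exact this
  simp [LinearMap.comp_apply, h1, h4]

-- 3. factorization through ranges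
lemma aux_exists_comp_of_range_le {p q r : ℕ}
    (f : (Fin q → ℂ) →ₗ[ℂ] (Fin p → ℂ)) (g : (Fin r → ℂ) →ₗ[ℂ] (Fin p → ℂ))
    (h : LinearMap.range g ≤ LinearMap.range f) :
    ∃ h' : (Fin r → ℂ) →ₗ[ℂ] (Fin q → ℂ), g = f ∘ₗ h' := by
  obtain ⟨s, hs⟩ := f.rangeRestrict.exists_rightInverse_of_surjective
    (LinearMap.range_rangeRestrict f)
  refine ⟨s ∘ₗ (g.codRestrict (LinearMap.range f) fun v => h (LinearMap.mem_range_self g v)),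
    LinearMap.ext fun v => ?_⟩
  have := congrArg Subtype.val
    (LinearMap.congr_fun hs ⟨g v, h (LinearMap.mem_range_self g v)⟩)
  exact this.symm

-- 4. matrix factorizations
lemma aux_exists_right_factor {p q r : ℕ} (A : Matrix (Fin p) (Fin r) ℂ)
    (B : Matrix (Fin p) (Fin q) ℂ)
    (h : LinearMap.range A.mulVecLin ≤ LinearMap.range B.mulVecLin) :
    ∃ m : Matrix (Fin q) (Fin r) ℂ, A = B * m := by
  obtain ⟨h', hh⟩ := aux_exists_comp_of_range_le B.mulVecLin A.mulVecLin h
  refine ⟨LinearMap.toMatrix' h', aux_matrix_eq ?_⟩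
  rw [Matrix.mulVecLin_mul, aux_mulVecLin_toMatrix', hh]

lemma aux_exists_left_factor {p q r : ℕ} (A : Matrix (Fin r) (Fin p) ℂ)
    (B : Matrix (Fin q) (Fin p) ℂ)
    (h : LinearMap.ker B.mulVecLin ≤ LinearMap.ker A.mulVecLin) :
    ∃ m : Matrix (Fin r) (Fin q) ℂ, A = m * B := by
  obtain ⟨h', hh⟩ := aux_exists_comp_of_ker_le B.mulVecLin A.mulVecLin h
  refine ⟨LinearMap.toMatrix' h', aux_matrix_eq ?_⟩
  rw [Matrix.mulVecLin_mul, aux_mulVecLin_toMatrix', hh]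

-- 5. rank/finrank facts
lemma aux_finrank_pi {n : ℕ} : Module.finrank ℂ (Fin n → ℂ) = n := by
  rw [Module.finrank_pi, Fintype.card_fin]

lemma aux_finrank_rowSpace {m n : ℕ} (P : Matrix (Fin m) (Fin n) ℂ) :
    Module.finrank ℂ (rowSpace P) = P.rank := by
  rw [show Module.finrank ℂ (rowSpace P) = Pᵀ.rank from rfl, Matrix.rank_transpose]

lemma aux_finrank_rng {n : ℕ} (x : Mn n) : Module.finrank ℂ (rng x) = x.rank :=
  aux_finrank_rowSpace x

lemma aux_rank_add_finrank_nul {n : ℕ} (x : Mn n) :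
    x.rank + Module.finrank ℂ (nul x) = n := by
  have h := LinearMap.finrank_range_add_finrank_ker xᵀ.mulVecLin
  rw [aux_finrank_pi] at h
  rw [← Matrix.rank_transpose x]
  exact h

lemma aux_ker_eq_bot {m n : ℕ} (P : Matrix (Fin m) (Fin n) ℂ) (h : P.rank = m) :
    LinearMap.ker Pᵀ.mulVecLin = ⊥ := by
  have h1 := LinearMap.finrank_range_add_finrank_ker Pᵀ.mulVecLin
  rw [aux_finrank_pi] at h1
  have h2 : Module.finrank ℂ (LinearMap.range Pᵀ.mulVecLin) = m := by
    rw [show Module.finrank ℂ (LinearMap.range Pᵀ.mulVecLin) = Pᵀ.rank from rfl,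
      Matrix.rank_transpose, h]
  rw [h2] at h1
  have : Module.finrank ℂ (LinearMap.ker Pᵀ.mulVecLin) = 0 := by omega
  exact Submodule.finrank_eq_zero.mp this

-- 6. row space of products
lemma aux_rowSpace_mul_le {p q m : ℕ} (A : Matrix (Fin p) (Fin q) ℂ)
    (B : Matrix (Fin q) (Fin m) ℂ) : rowSpace (A * B) ≤ rowSpace B := by
  rw [rowSpace, rowSpace, Matrix.transpose_mul, Matrix.mulVecLin_mul]
  exact LinearMap.range_comp_le_range _ _

-- 7. nul of products
lemma aux_nul_le {n : ℕ} (x y : Mn n) : nul x ≤ nul (x * y) := by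
  rw [nul, nul, Matrix.transpose_mul, Matrix.mulVecLin_mul]
  intro v hv
  simp only [LinearMap.mem_ker] at hv ⊢
  rw [LinearMap.comp_apply, hv, map_zero]

-- 8. zero products and row spaces
lemma aux_mul_eq_zero_iff {p n : ℕ} (M : Matrix (Fin p) (Fin n) ℂ) (y : Mn n) :
    M * y = 0 ↔ rowSpace M ≤ nul y := by
  rw [rowSpace, nul, LinearMap.range_le_ker_iff]
  constructor
  · intro h
    rw [← Matrix.mulVecLin_mul, ← Matrix.transpose_mul, h]
    simp [Matrix.mulVecLin_zero]
  · intro h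
    have : ((M * y)ᵀ).mulVecLin = (0 : Matrix (Fin n) (Fin p) ℂ).mulVecLin := by
      rw [Matrix.transpose_mul, Matrix.mulVecLin_mul, h, Matrix.mulVecLin_zero]
    have := aux_matrix_eq this
    rw [← Matrix.transpose_zero] at this
    exact Matrix.transpose_injective this

-- 9. Green characterizations
lemma aux_rSet {n : ℕ} (a : Mn n) : rSet Set.univ a = {y | nul a ≤ nul y} := by
  ext y
  constructor
  · rintro ⟨x, -, rfl⟩
    exact aux_nul_le a x
  · intro h
    obtain ⟨m, hm⟩ := aux_exists_left_factor yᵀ aᵀ h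
    exact ⟨mᵀ, Set.mem_univ _, by
      rw [← Matrix.transpose_transpose y, hm, Matrix.transpose_mul,
        Matrix.transpose_transpose]⟩

lemma aux_lSet {n : ℕ} (a : Mn n) : lSet Set.univ a = {y | rng y ≤ rng a} := by
  ext y
  constructor
  · rintro ⟨x, -, rfl⟩
    show rowSpace (x * a) ≤ rowSpace a
    rw [rowSpace, rowSpace, Matrix.transpose_mul, Matrix.mulVecLin_mul]
    exact LinearMap.range_comp_le_range _ _
  · intro h
    obtain ⟨m, hm⟩ := aux_exists_right_factor yᵀ aᵀ h
    exact ⟨mᵀ, Set.mem_univ _, by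
      rw [← Matrix.transpose_transpose y, hm, Matrix.transpose_mul,
        Matrix.transpose_transpose]⟩

lemma aux_greenR {n : ℕ} {a b : Mn n} : GreenR Set.univ a b ↔ nul a = nul b := by
  constructor
  · intro h
    have ha : a ∈ rSet Set.univ a := ⟨1, Set.mem_univ _, (mul_one a).symm⟩
    have hb : b ∈ rSet Set.univ b := ⟨1, Set.mem_univ _, (mul_one b).symm⟩
    have h1 : b ∈ rSet Set.univ a := by rw [h]; exact hb
    have h2 : a ∈ rSet Set.univ b := by rw [← h]; exact ha
    rw [aux_rSet] at h1 h2
    exact le_antisymm h1 h2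
  · intro h
    show rSet Set.univ a = rSet Set.univ b
    rw [aux_rSet, aux_rSet, h]

lemma aux_greenL {n : ℕ} {a b : Mn n} : GreenL Set.univ a b ↔ rng a = rng b := by
  constructor
  · intro h
    have ha : a ∈ lSet Set.univ a := ⟨1, Set.mem_univ _, (one_mul a).symm⟩
    have hb : b ∈ lSet Set.univ b := ⟨1, Set.mem_univ _, (one_mul b).symm⟩
    have h1 : b ∈ lSet Set.univ a := by rw [h]; exact hb
    have h2 : a ∈ lSet Set.univ b := by rw [← h]; exact ha
    rw [aux_lSet] at h1 h2
    exact le_antisymm h2 h1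
  · intro h
    show lSet Set.univ a = lSet Set.univ b
    rw [aux_lSet, aux_lSet, h]

lemma aux_mem_RClass {n : ℕ} {a b : Mn n} : b ∈ RClass Set.univ a ↔ nul a = nul b := by
  rw [show (b ∈ RClass Set.univ a) ↔ (b ∈ Set.univ ∧ GreenR Set.univ a b) from Iff.rfl]
  simp [aux_greenR]

lemma aux_mem_LClass {n : ℕ} {a b : Mn n} : b ∈ LClass Set.univ a ↔ rng a = rng b := by
  rw [show (b ∈ LClass Set.univ a) ↔ (b ∈ Set.univ ∧ GreenL Set.univ a b) from Iff.rfl]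
  simp [aux_greenL]

lemma aux_rank_eq_of_nul_eq {n : ℕ} {a b : Mn n} (h : nul a = nul b) : b.rank = a.rank := by
  have h1 := aux_rank_add_finrank_nul a
  have h2 := aux_rank_add_finrank_nul b
  rw [h] at h1
  omega

-- 10. pivots
lemma aux_exists_pivot {p q r : ℕ} (A : Matrix (Fin p) (Fin q) ℂ) (h : A.rank = r) :
    ∃ (c : Matrix (Fin q) (Fin r) ℂ) (d : Matrix (Fin r) (Fin p) ℂ), d * A * c = 1 := by
  have hA : Module.finrank ℂ (LinearMap.range A.mulVecLin) = r := h
  let b : Basis (Fin r) ℂ (LinearMap.range A.mulVecLin) := Module.finBasisOfFinrankEq ℂ _ hA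
  let ψ : (Fin r → ℂ) →ₗ[ℂ] (Fin p → ℂ) :=
    (LinearMap.range A.mulVecLin).subtype ∘ₗ (b.equivFun.symm : (Fin r → ℂ) ≃ₗ[ℂ] _).toLinearMap
  let φ : (Fin q → ℂ) →ₗ[ℂ] (Fin r → ℂ) :=
    (b.equivFun : _ ≃ₗ[ℂ] (Fin r → ℂ)).toLinearMap ∘ₗ A.mulVecLin.rangeRestrict
  have hψφ : A.mulVecLin = ψ ∘ₗ φ := by
    apply LinearMap.ext
    intro v
    show A.mulVecLin v =
      (LinearMap.range A.mulVecLin).subtype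
        (b.equivFun.symm (b.equivFun (A.mulVecLin.rangeRestrict v)))
    rw [LinearEquiv.symm_apply_apply]
    rfl
  have hψinj : LinearMap.ker ψ = ⊥ := by
    rw [LinearMap.ker_eq_bot]
    exact (Submodule.injective_subtype _).comp b.equivFun.symm.injective
  obtain ⟨g, hg⟩ := ψ.exists_leftInverse_of_injective hψinj
  have hφsurj : LinearMap.range φ = ⊤ := by
    rw [LinearMap.range_comp, LinearMap.range_rangeRestrict, Submodule.map_top,
      LinearEquiv.range]
  obtain ⟨s, hs⟩ := φ.exists_rightInverse_of_surjective hφsurj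
  refine ⟨LinearMap.toMatrix' s, LinearMap.toMatrix' g, ?_⟩
  have hA' : A = LinearMap.toMatrix' A.mulVecLin := by
    rw [← Matrix.toLin'_apply', LinearMap.toMatrix'_toLin']
  rw [hA', ← LinearMap.toMatrix'_comp, ← LinearMap.toMatrix'_comp]
  have : (g ∘ₗ A.mulVecLin) ∘ₗ s = LinearMap.id := by
    apply LinearMap.ext
    intro v
    have h1 : φ (s v) = v := LinearMap.congr_fun hs v
    have h2 : ∀ w, g (ψ w) = w := fun w => LinearMap.congr_fun hg w
    simp only [LinearMap.comp_apply, hψφ, LinearMap.id_apply]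
    rw [h1, h2]
  rw [this, LinearMap.toMatrix'_id]

-- 11. rank lower bound from pivots
lemma aux_rank_ge {p q r : ℕ} (c : Matrix (Fin q) (Fin r) ℂ) (d : Matrix (Fin r) (Fin p) ℂ)
    (x : Matrix (Fin p) (Fin q) ℂ) (h : (d * x * c).det ≠ 0) : r ≤ x.rank := by
  have h1 : (d * x * c).rank = r := by
    rw [Matrix.rank_of_isUnit _ ((Matrix.isUnit_iff_isUnit_det _).2 (isUnit_iff_ne_zero.2 h)),
      Fintype.card_fin]
  calc r = (d * x * c).rank := h1.symm
    _ ≤ (d * x).rank := Matrix.rank_mul_le_left _ _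
    _ ≤ x.rank := Matrix.rank_mul_le_right _ _

-- 12. local generalized inverse identity
lemma aux_gen_inv {n r : ℕ} (x : Mn n) (hx : x.rank = r) (c : Matrix (Fin n) (Fin r) ℂ)
    (d : Matrix (Fin r) (Fin n) ℂ) (h : IsUnit (d * x * c).det) :
    x * (c * ((d * x * c)⁻¹ * d)) * x = x := by
  have h1 : r ≤ (x * c).rank := by
    have hd : (d * x * c).rank = r := by
      rw [Matrix.rank_of_isUnit _ ((Matrix.isUnit_iff_isUnit_det _).2 h), Fintype.card_fin]
    calc r = (d * x * c).rank := hd.symm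
      _ = (d * (x * c)).rank := by rw [Matrix.mul_assoc]
      _ ≤ (x * c).rank := Matrix.rank_mul_le_right _ _
  have h2 : (x * c).rank ≤ r := by
    have := Matrix.rank_le_card_width (x * c)
    rwa [Fintype.card_fin] at this
  have hle : LinearMap.range (x * c).mulVecLin ≤ LinearMap.range x.mulVecLin := by
    rw [Matrix.mulVecLin_mul]
    exact LinearMap.range_comp_le_range _ _
  have heq : LinearMap.range (x * c).mulVecLin = LinearMap.range x.mulVecLin := by
    apply Submodule.eq_of_le_of_finrank_le hle
    show Module.finrank ℂ (LinearMap.range x.mulVecLin) ≤ _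
    have e1 : Module.finrank ℂ (LinearMap.range x.mulVecLin) = x.rank := rfl
    have e2 : Module.finrank ℂ (LinearMap.range (x * c).mulVecLin) = (x * c).rank := rfl
    omega
  obtain ⟨m, hm⟩ := aux_exists_right_factor x (x * c) (le_of_eq heq.symm)
  nth_rewrite 3 [hm]
  have key : x * (c * ((d * x * c)⁻¹ * d)) * (x * c * m) = x * c * ((d * x * c)⁻¹ * (d * x * c)) * m := by
    simp only [Matrix.mul_assoc]
  rw [key, Matrix.nonsing_inv_mul _ h, Matrix.mul_one, ← hm]

-- 13. P * Pᴴ invertible for full row rank P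
open scoped ComplexOrder in
lemma aux_isUnit_det_PPH {m n : ℕ} (P : Matrix (Fin m) (Fin n) ℂ) (h : P.rank = m) :
    IsUnit (P * Pᴴ).det := by
  have hr : (P * Pᴴ).rank = m := by
    rw [Matrix.rank_self_mul_conjTranspose, h]
  have htop : LinearMap.range (P * Pᴴ).mulVecLin = ⊤ := by
    apply Submodule.eq_top_of_finrank_eq
    rw [aux_finrank_pi]
    exact hr
  have hinj : Function.Injective (P * Pᴴ).mulVecLin :=
    (LinearMap.injective_iff_surjective).2 (LinearMap.range_eq_top.1 htop)
  rw [isUnit_iff_ne_zero]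
  intro hdet
  obtain ⟨v, hv, hv0⟩ := (Matrix.exists_mulVec_eq_zero_iff).2 hdet
  exact hv (hinj (show (P * Pᴴ).mulVecLin v = (P * Pᴴ).mulVecLin 0 by
    simpa [Matrix.mulVecLin_apply] using hv0))

-- 14. projection fixes matrices with rows in rowSpace P
lemma aux_proj_fix {m n p : ℕ} (P : Matrix (Fin m) (Fin n) ℂ) (hP : P.rank = m)
    (x : Matrix (Fin p) (Fin n) ℂ) (hx : rowSpace x ≤ rowSpace P) :
    x * (Pᴴ * ((P * Pᴴ)⁻¹ * P)) = x := by
  obtain ⟨m', hm'⟩ := aux_exists_right_factor xᵀ Pᵀ hx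
  have hx' : x = m'ᵀ * P := by
    rw [← Matrix.transpose_transpose x, hm', Matrix.transpose_mul, Matrix.transpose_transpose]
  have key : P * (Pᴴ * ((P * Pᴴ)⁻¹ * P)) = P := by
    rw [← Matrix.mul_assoc, ← Matrix.mul_assoc, Matrix.mul_nonsing_inv _ (aux_isUnit_det_PPH P hP),
      Matrix.one_mul]
  rw [hx', Matrix.mul_assoc, key]

-- 15. a matrix whose row space is a given subspace
lemma aux_exists_row_basis {n m : ℕ} (S : Submodule ℂ (Fin n → ℂ))
    (h : Module.finrank ℂ S = m) :
    ∃ N : Matrix (Fin m) (Fin n) ℂ, rowSpace N = S ∧ N.rank = m := by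
  let b : Basis (Fin m) ℂ S := Module.finBasisOfFinrankEq ℂ _ h
  let f : (Fin m → ℂ) →ₗ[ℂ] (Fin n → ℂ) :=
    S.subtype ∘ₗ (b.equivFun.symm : (Fin m → ℂ) ≃ₗ[ℂ] _).toLinearMap
  refine ⟨(LinearMap.toMatrix' f)ᵀ, ?_, ?_⟩
  · rw [rowSpace, Matrix.transpose_transpose,
      show (LinearMap.toMatrix' f).mulVecLin = f from by
        rw [← Matrix.toLin'_apply']; exact Matrix.toLin'_toMatrix' f,
      LinearMap.range_comp, LinearEquiv.range, Submodule.map_top, Submodule.range_subtype]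
  · have hf : LinearMap.range f = S := by
      rw [LinearMap.range_comp, LinearEquiv.range, Submodule.map_top, Submodule.range_subtype]
    have : ((LinearMap.toMatrix' f)ᵀ)ᵀ.rank = m := by
      rw [Matrix.transpose_transpose,
        show ((LinearMap.toMatrix' f).rank = Module.finrank ℂ (LinearMap.range (LinearMap.toMatrix' f).mulVecLin)) from rfl,
        show (LinearMap.toMatrix' f).mulVecLin = f from by
          rw [← Matrix.toLin'_apply']; exact Matrix.toLin'_toMatrix' f, hf, h]
    rw [← Matrix.rank_transpose]
    exact this

-- 16. a matrix with prescribed left null space and row space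
lemma aux_exists_matrix {n : ℕ} (K V : Submodule ℂ (Fin n → ℂ))
    (h : Module.finrank ℂ K + Module.finrank ℂ V = n) :
    ∃ x : Mn n, nul x = K ∧ rng x = V := by
  obtain ⟨C, hC⟩ := K.exists_isCompl
  have hCfin : Module.finrank ℂ C = Module.finrank ℂ V := by
    have := Submodule.finrank_add_eq_of_isCompl hC
    rw [aux_finrank_pi] at this
    omega
  let e : C ≃ₗ[ℂ] V := LinearEquiv.ofFinrankEq _ _ hCfin
  let π : (Fin n → ℂ) →ₗ[ℂ] C := C.linearProjOfIsCompl K hC.symm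
  let f : (Fin n → ℂ) →ₗ[ℂ] (Fin n → ℂ) := V.subtype ∘ₗ e.toLinearMap ∘ₗ π
  have hmv : ((LinearMap.toMatrix' f)ᵀ)ᵀ.mulVecLin = f := by
    rw [Matrix.transpose_transpose, ← Matrix.toLin'_apply']
    exact Matrix.toLin'_toMatrix' f
  refine ⟨(LinearMap.toMatrix' f)ᵀ, ?_, ?_⟩
  · rw [nul, hmv]
    have h1 : LinearMap.ker f = LinearMap.ker (e.toLinearMap ∘ₗ π) := by
      rw [show f = V.subtype ∘ₗ (e.toLinearMap ∘ₗ π) from rfl, LinearMap.ker_comp,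
        Submodule.ker_subtype, Submodule.comap_bot]
    rw [h1, LinearMap.ker_comp, LinearEquiv.ker, Submodule.comap_bot]
    exact Submodule.linearProjOfIsCompl_ker _
  · rw [rng, hmv]
    rw [show f = V.subtype ∘ₗ e.toLinearMap ∘ₗ π from rfl, LinearMap.range_comp,
      LinearMap.range_comp,
      show LinearMap.range π = ⊤ from Submodule.linearProjOfIsCompl_range _, Submodule.map_top,
      LinearEquiv.range, Submodule.map_top, Submodule.range_subtype]

-- Grassmann topology interface
noncomputable def qmap (n k : ℕ) : {P : Matrix (Fin k) (Fin n) ℂ // P.rank = k} → GrassModK n k :=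
  fun P => toGrass k (rowSpace P.1)

lemma aux_qmap_continuous (n k : ℕ) : Continuous (qmap n k) :=
  continuous_coinduced_rng

lemma aux_isOpen_grass_iff {n k : ℕ} {V : Set (GrassModK n k)} :
    IsOpen V ↔ IsOpen (qmap n k ⁻¹' V) :=
  isOpen_coinduced

lemma aux_qmap_mem_grassSet {n k : ℕ} (P : {P : Matrix (Fin k) (Fin n) ℂ // P.rank = k}) :
    qmap n k P ∈ GrassSet n k := by
  show Module.finrank ℂ (rowSpace P.1) = k
  rw [aux_finrank_rowSpace, P.2]

-- key R-side section lemma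
lemma aux_R_section {n k : ℕ} (a : Mn n) (hak : a.rank = k)
    {C : Submodule ℂ (Fin n → ℂ)} (hC : IsCompl (nul a) C)
    {R₀ : Matrix (Fin k) (Fin n) ℂ} (hR₀row : rowSpace R₀ = C) (hR₀rank : R₀.rank = k)
    (x : Mn n) (hx : nul x = nul a) :
    rowSpace (R₀ * x) = rng x ∧ (R₀ * x).rank = k := by
  have hxrank : x.rank = k := by rw [aux_rank_eq_of_nul_eq hx.symm, hak]
  have hle : rowSpace (R₀ * x) ≤ rng x := aux_rowSpace_mul_le R₀ x
  have hker : LinearMap.ker (xᵀ.mulVecLin ∘ₗ R₀ᵀ.mulVecLin) = ⊥ := by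
    rw [LinearMap.ker_eq_bot']
    intro v hv
    rw [LinearMap.comp_apply] at hv
    have h1 : R₀ᵀ.mulVecLin v ∈ nul x := hv
    have h2 : R₀ᵀ.mulVecLin v ∈ C := hR₀row ▸ LinearMap.mem_range_self _ v
    have h3 : R₀ᵀ.mulVecLin v = 0 := by
      rw [hx] at h1
      exact (Submodule.disjoint_def.1 hC.disjoint) _ h1 h2
    have h4 : LinearMap.ker R₀ᵀ.mulVecLin = ⊥ := by
      have e1 := LinearMap.finrank_range_add_finrank_ker R₀ᵀ.mulVecLin
      rw [aux_finrank_pi] at e1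
      have e2 : Module.finrank ℂ (LinearMap.range R₀ᵀ.mulVecLin) = k := by
        rw [show LinearMap.range R₀ᵀ.mulVecLin = rowSpace R₀ from rfl]
        rw [aux_finrank_rowSpace, hR₀rank]
      have : Module.finrank ℂ (LinearMap.ker R₀ᵀ.mulVecLin) = 0 := by omega
      exact Submodule.finrank_eq_zero.mp this
    rw [LinearMap.ker_eq_bot'] at h4
    exact h4 v h3
  have hfr : Module.finrank ℂ (rowSpace (R₀ * x)) = k := by
    have : rowSpace (R₀ * x) = LinearMap.range (xᵀ.mulVecLin ∘ₗ R₀ᵀ.mulVecLin) := by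
      rw [rowSpace, Matrix.transpose_mul, Matrix.mulVecLin_mul]
    rw [this]
    have e1 := LinearMap.finrank_range_add_finrank_ker (xᵀ.mulVecLin ∘ₗ R₀ᵀ.mulVecLin)
    rw [aux_finrank_pi, hker, finrank_bot] at e1
    omega
  have heq : rowSpace (R₀ * x) = rng x := by
    apply Submodule.eq_of_le_of_finrank_le hle
    rw [aux_finrank_rng, hxrank, hfr]
  refine ⟨heq, ?_⟩
  rw [← aux_finrank_rowSpace, hfr]

-- R-side continuity
lemma aux_R_continuous {n k : ℕ} (a : Mn n) (hak : a.rank = k) :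
    Continuous (fun x : ↥(RClass Set.univ a) => toGrass k (rng x.1)) := by
  obtain ⟨C, hC⟩ := (nul a).exists_isCompl
  have hCfin : Module.finrank ℂ C = k := by
    have h1 := Submodule.finrank_add_eq_of_isCompl hC
    rw [aux_finrank_pi] at h1
    have h2 := aux_rank_add_finrank_nul a
    omega
  obtain ⟨R₀, hR₀row, hR₀rank⟩ := aux_exists_row_basis C hCfin
  have key := aux_R_section a hak hC hR₀row hR₀rank
  have hfun : (fun x : ↥(RClass Set.univ a) => toGrass k (rng x.1)) =
      (qmap n k) ∘ (fun x : ↥(RClass Set.univ a) =>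
        (⟨R₀ * x.1, (key x.1 (aux_mem_RClass.1 x.2).symm).2⟩ :
          {P : Matrix (Fin k) (Fin n) ℂ // P.rank = k})) := by
    funext x
    show toGrass k (rng x.1) = toGrass k (rowSpace (R₀ * x.1))
    rw [(key x.1 (aux_mem_RClass.1 x.2).symm).1]
  rw [hfun]
  exact (aux_qmap_continuous n k).comp
    (Continuous.subtype_mk (continuous_const.matrix_mul continuous_subtype_val) _)

-- R-side surjectivity
lemma aux_R_range {n k : ℕ} (a : Mn n) (hak : a.rank = k) :
    Set.range (fun x : ↥(RClass Set.univ a) => toGrass k (rng x.1)) = GrassSet n k := by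
  ext W
  constructor
  · rintro ⟨x, rfl⟩
    show Module.finrank ℂ (rng x.1) = k
    rw [aux_finrank_rng, aux_rank_eq_of_nul_eq (aux_mem_RClass.1 x.2), hak]
  · intro hW
    have hWf : Module.finrank ℂ (toSubmodule W) = k := hW
    have hsum : Module.finrank ℂ (nul a) + Module.finrank ℂ (toSubmodule W) = n := by
      have := aux_rank_add_finrank_nul a
      omega
    obtain ⟨x, hxnul, hxrng⟩ := aux_exists_matrix (nul a) (toSubmodule W) hsum
    refine ⟨⟨x, aux_mem_RClass.2 hxnul.symm⟩, ?_⟩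
    show toGrass k (rng x) = W
    rw [hxrng]
    rfl

-- R-side openness
set_option maxHeartbeats 1000000 in
lemma aux_R_open {n k : ℕ} (a : Mn n) (hak : a.rank = k)
    (U : Set ↥(RClass Set.univ a)) (hU : IsOpen U) :
    IsOpen (Subtype.val ⁻¹'
      ((fun x : ↥(RClass Set.univ a) => toGrass k (rng x.1)) '' U) :
        Set ↥(GrassSet n k)) := by
  set Γ := fun x : ↥(RClass Set.univ a) => toGrass k (rng x.1) with hΓ
  obtain ⟨Uo, hUo, hUeq⟩ := isOpen_induced_iff.1 hU
  set V : Set (GrassModK n k) := {W | W ∈ Γ '' U ∨ W ∉ GrassSet n k} with hV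
  have hqV : qmap n k ⁻¹' V = qmap n k ⁻¹' (Γ '' U) := by
    ext P
    simp only [Set.mem_preimage, hV, Set.mem_setOf_eq]
    constructor
    · rintro (h | h)
      · exact h
      · exact absurd (aux_qmap_mem_grassSet P) h
    · exact Or.inl
  have hVopen : IsOpen V := by
    rw [aux_isOpen_grass_iff, hqV, isOpen_iff_mem_nhds]
    rintro P₀ hP₀
    obtain ⟨x, hxU, hx⟩ := hP₀
    have hxrow : rowSpace x.1 = rowSpace P₀.1 := hx
    have hxmem : nul a = nul x.1 := aux_mem_RClass.1 x.2
    have hxrank : x.1.rank = k := by rw [aux_rank_eq_of_nul_eq hxmem, hak]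
    have hxUo : x.1 ∈ Uo := by rw [← hUeq] at hxU; exact hxU
    obtain ⟨c, d, hcd⟩ := aux_exists_pivot x.1 hxrank
    set φ : Matrix (Fin k) (Fin n) ℂ → Mn n :=
      fun M => x.1 * (Mᴴ * ((M * Mᴴ)⁻¹ * M)) with hφ
    have hφP₀ : φ P₀.1 = x.1 := aux_proj_fix P₀.1 P₀.2 x.1 (le_of_eq hxrow)
    have hdet₀ : (P₀.1 * P₀.1ᴴ).det ≠ 0 := (aux_isUnit_det_PPH P₀.1 P₀.2).ne_zero
    have hcont2 : ContinuousAt (fun M : Matrix (Fin k) (Fin n) ℂ => (M * Mᴴ)⁻¹) P₀.1 := by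
      have h1 : ContinuousAt Inv.inv (P₀.1 * P₀.1ᴴ) := by
        apply continuousAt_matrix_inv
        rw [Ring.inverse_eq_inv']
        exact continuousAt_inv₀ hdet₀
      have h2 : ContinuousAt (fun M : Matrix (Fin k) (Fin n) ℂ => M * Mᴴ) P₀.1 :=
        (continuous_id.matrix_mul continuous_id.matrix_conjTranspose).continuousAt
      exact ContinuousAt.comp (g := Inv.inv) h1 h2
    have hφcont : ContinuousAt φ P₀.1 := by
      have h1 : Continuous (fun q : (Matrix (Fin k) (Fin n) ℂ) × (Matrix (Fin k) (Fin k) ℂ) =>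
          x.1 * (q.1ᴴ * (q.2 * q.1))) :=
        continuous_const.matrix_mul
          ((continuous_fst.matrix_conjTranspose).matrix_mul
            (continuous_snd.matrix_mul continuous_fst))
      exact ContinuousAt.comp₂ h1.continuousAt continuousAt_id hcont2
    have E1 : ∀ᶠ M in nhds P₀.1, (d * φ M * c).det ≠ 0 := by
      have hg : Continuous (fun y : Mn n => (d * y * c).det) :=
        ((continuous_const.matrix_mul continuous_id).matrix_mul continuous_const).matrix_det
      have hco : ContinuousAt (fun M => (d * φ M * c).det) P₀.1 :=
        (hg.continuousAt).comp hφcont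
      apply hco.eventually_ne
      rw [hφP₀, hcd, Matrix.det_one]
      exact one_ne_zero
    have E2 : ∀ᶠ M in nhds P₀.1, φ M ∈ Uo := by
      have : φ ⁻¹' Uo ∈ nhds P₀.1 :=
        hφcont.preimage_mem_nhds (by rw [hφP₀]; exact hUo.mem_nhds hxUo)
      exact this
    have Esub : ∀ᶠ P : {P : Matrix (Fin k) (Fin n) ℂ // P.rank = k} in nhds P₀,
        ((d * φ P.1 * c).det ≠ 0 ∧ φ P.1 ∈ Uo) :=
      (continuous_subtype_val.tendsto P₀).eventually (E1.and E2)
    apply Filter.mem_of_superset Esub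
    rintro P ⟨hPdet, hPUo⟩
    set M := P.1 with hM
    have hrle : (φ M).rank ≤ k := by
      have h1 : (φ M).rank ≤ M.rank :=
        le_trans (Matrix.rank_mul_le_right _ _)
          (le_trans (Matrix.rank_mul_le_right _ _) (Matrix.rank_mul_le_right _ _))
      rw [P.2] at h1; exact h1
    have hrge : k ≤ (φ M).rank := aux_rank_ge c d (φ M) hPdet
    have hrEq : (φ M).rank = k := le_antisymm hrle hrge
    have hnle : nul x.1 ≤ nul (φ M) := aux_nul_le x.1 _
    have hnEq : nul x.1 = nul (φ M) := by
      apply Submodule.eq_of_le_of_finrank_le hnle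
      have e1 := aux_rank_add_finrank_nul (φ M)
      have e2 := aux_rank_add_finrank_nul x.1
      omega
    have hmem : φ M ∈ RClass Set.univ a := aux_mem_RClass.2 (hxmem.trans hnEq)
    have hfact : φ M = (x.1 * (Mᴴ * (M * Mᴴ)⁻¹)) * M := by
      simp only [hφ, Matrix.mul_assoc]
    have hrngle : rng (φ M) ≤ rowSpace M := by
      rw [show rng (φ M) = rowSpace (φ M) from rfl, hfact]
      exact aux_rowSpace_mul_le _ _
    have hrngEq : rng (φ M) = rowSpace M := by
      apply Submodule.eq_of_le_of_finrank_le hrngle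
      rw [aux_finrank_rowSpace, aux_finrank_rng, P.2, hrEq]
    refine ⟨⟨φ M, hmem⟩, ?_, ?_⟩
    · rw [← hUeq]
      exact hPUo
    · show toGrass k (rng (φ M)) = toGrass k (rowSpace M)
      rw [hrngEq]
  have hpre : (Subtype.val ⁻¹' (Γ '' U) : Set ↥(GrassSet n k)) = Subtype.val ⁻¹' V := by
    ext W
    simp only [Set.mem_preimage, hV, Set.mem_setOf_eq]
    constructor
    · exact Or.inl
    · rintro (h | h)
      · exact h
      · exact absurd W.2 h
  rw [hpre]
  exact hVopen.preimage continuous_subtype_val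

lemma aux_rank_eq_of_rng_eq {n : ℕ} {a b : Mn n} (h : rng a = rng b) : b.rank = a.rank := by
  have h1 := aux_finrank_rng a
  have h2 := aux_finrank_rng b
  rw [← h] at h2
  omega

-- L-side continuity
set_option maxHeartbeats 1000000 in
lemma aux_L_continuous {n k : ℕ} (a : Mn n) (hak : a.rank = k) :
    Continuous (fun x : ↥(LClass Set.univ a) => toGrass (n - k) (nul x.1)) := by
  rw [continuous_iff_continuousAt]
  intro x₀
  set Δ := fun x : ↥(LClass Set.univ a) => toGrass (n - k) (nul x.1) with hΔ
  have hx₀r : x₀.1.rank = k := by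
    rw [aux_rank_eq_of_rng_eq (aux_mem_LClass.1 x₀.2), hak]
  have hnulfin : Module.finrank ℂ (nul x₀.1) = n - k := by
    have := aux_rank_add_finrank_nul x₀.1
    omega
  obtain ⟨c, d, hcd⟩ := aux_exists_pivot x₀.1 hx₀r
  obtain ⟨N₀, hN₀row, hN₀rank⟩ := aux_exists_row_basis (nul x₀.1) hnulfin
  set Nf : Mn n → Matrix (Fin (n - k)) (Fin n) ℂ :=
    fun x => N₀ * (1 - x * (c * ((d * x * c)⁻¹ * d))) with hNf
  have hN₀x₀ : N₀ * x₀.1 = 0 := (aux_mul_eq_zero_iff _ _).2 (le_of_eq hN₀row)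
  have hNf₀ : Nf x₀.1 = N₀ := by
    show N₀ * (1 - x₀.1 * (c * ((d * x₀.1 * c)⁻¹ * d))) = N₀
    rw [Matrix.mul_sub, Matrix.mul_one, ← Matrix.mul_assoc, hN₀x₀, Matrix.zero_mul, sub_zero]
  obtain ⟨c', d', hcd'⟩ := aux_exists_pivot N₀ hN₀rank
  have hdet₀ : (d * x₀.1 * c).det ≠ 0 := by rw [hcd, Matrix.det_one]; exact one_ne_zero
  have hcont2 : ContinuousAt (fun x : Mn n => (d * x * c)⁻¹) x₀.1 := by
    have h1 : ContinuousAt Inv.inv (d * x₀.1 * c) := by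
      apply continuousAt_matrix_inv
      rw [Ring.inverse_eq_inv']
      exact continuousAt_inv₀ hdet₀
    have h2 : ContinuousAt (fun x : Mn n => d * x * c) x₀.1 :=
      ((continuous_const.matrix_mul continuous_id).matrix_mul continuous_const).continuousAt
    exact ContinuousAt.comp (g := Inv.inv) h1 h2
  have hNfcont : ContinuousAt Nf x₀.1 := by
    have h1 : Continuous (fun q : (Mn n) × (Matrix (Fin k) (Fin k) ℂ) =>
        N₀ * (1 - q.1 * (c * (q.2 * d)))) :=
      continuous_const.matrix_mul
        (continuous_const.sub (continuous_fst.matrix_mul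
          (continuous_const.matrix_mul (continuous_snd.matrix_mul continuous_const))))
    exact ContinuousAt.comp₂ h1.continuousAt continuousAt_id hcont2
  rw [ContinuousAt, tendsto_nhds]
  intro V hVopen hVmem
  have hq : IsOpen (qmap n (n - k) ⁻¹' V) := aux_isOpen_grass_iff.1 hVopen
  obtain ⟨T, hT, hTeq⟩ := isOpen_induced_iff.1 hq
  have hN₀mem : (⟨N₀, hN₀rank⟩ : {P : Matrix (Fin (n - k)) (Fin n) ℂ // P.rank = n - k}) ∈
      qmap n (n - k) ⁻¹' V := by
    show qmap n (n - k) ⟨N₀, hN₀rank⟩ ∈ V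
    have he : qmap n (n - k) ⟨N₀, hN₀rank⟩ = Δ x₀ := by
      show toGrass (n - k) (rowSpace N₀) = toGrass (n - k) (nul x₀.1)
      rw [hN₀row]
    rw [he]
    exact hVmem
  have hN₀T : N₀ ∈ T := by rw [← hTeq] at hN₀mem; exact hN₀mem
  have F1 : ∀ᶠ y in nhds x₀.1, (d * y * c).det ≠ 0 := by
    have hg : Continuous (fun y : Mn n => (d * y * c).det) :=
      ((continuous_const.matrix_mul continuous_id).matrix_mul continuous_const).matrix_det
    exact hg.continuousAt.eventually_ne (by rw [hcd, Matrix.det_one]; exact one_ne_zero)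
  have F2 : ∀ᶠ y in nhds x₀.1, (d' * Nf y * c').det ≠ 0 := by
    have hg : Continuous (fun z : Matrix (Fin (n - k)) (Fin n) ℂ => (d' * z * c').det) :=
      ((continuous_const.matrix_mul continuous_id).matrix_mul continuous_const).matrix_det
    have hco : ContinuousAt (fun y => (d' * Nf y * c').det) x₀.1 :=
      hg.continuousAt.comp hNfcont
    exact hco.eventually_ne (by rw [hNf₀, hcd', Matrix.det_one]; exact one_ne_zero)
  have F3 : ∀ᶠ y in nhds x₀.1, Nf y ∈ T :=
    hNfcont.preimage_mem_nhds (by rw [hNf₀]; exact hT.mem_nhds hN₀T)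
  have Fsub : ∀ᶠ x : ↥(LClass Set.univ a) in nhds x₀,
      ((d * x.1 * c).det ≠ 0 ∧ (d' * Nf x.1 * c').det ≠ 0 ∧ Nf x.1 ∈ T) :=
    (continuous_subtype_val.tendsto x₀).eventually (F1.and (F2.and F3))
  apply Filter.mem_of_superset Fsub
  rintro x ⟨hF1, hF2, hF3⟩
  have hxr : x.1.rank = k := by
    rw [aux_rank_eq_of_rng_eq (aux_mem_LClass.1 x.2), hak]
  have hxnulfin : Module.finrank ℂ (nul x.1) = n - k := by
    have := aux_rank_add_finrank_nul x.1
    omega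
  have hzz : x.1 * (c * ((d * x.1 * c)⁻¹ * d)) * x.1 = x.1 :=
    aux_gen_inv x.1 hxr c d (isUnit_iff_ne_zero.2 hF1)
  have hNx : Nf x.1 * x.1 = 0 := by
    show N₀ * (1 - x.1 * (c * ((d * x.1 * c)⁻¹ * d))) * x.1 = 0
    rw [Matrix.mul_assoc, Matrix.sub_mul, Matrix.one_mul, hzz, sub_self, Matrix.mul_zero]
  have hrowle : rowSpace (Nf x.1) ≤ nul x.1 := (aux_mul_eq_zero_iff _ _).1 hNx
  have hr1 : n - k ≤ (Nf x.1).rank := aux_rank_ge c' d' (Nf x.1) hF2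
  have hr2 : (Nf x.1).rank ≤ n - k := by
    rw [← aux_finrank_rowSpace]
    exact le_trans (Submodule.finrank_mono hrowle) (le_of_eq hxnulfin)
  have hrEq : (Nf x.1).rank = n - k := le_antisymm hr2 hr1
  have hrowEq : rowSpace (Nf x.1) = nul x.1 := by
    apply Submodule.eq_of_le_of_finrank_le hrowle
    rw [aux_finrank_rowSpace, hrEq, hxnulfin]
  show Δ x ∈ V
  have he : Δ x = qmap n (n - k) ⟨Nf x.1, hrEq⟩ := by
    show toGrass (n - k) (nul x.1) = toGrass (n - k) (rowSpace (Nf x.1))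
    rw [hrowEq]
  rw [he]
  have : (⟨Nf x.1, hrEq⟩ : {P : Matrix (Fin (n - k)) (Fin n) ℂ // P.rank = n - k}) ∈
      qmap n (n - k) ⁻¹' V := by
    rw [← hTeq]
    exact hF3
  exact this

-- L-side surjectivity
lemma aux_L_range {n k : ℕ} (a : Mn n) (hak : a.rank = k) :
    Set.range (fun x : ↥(LClass Set.univ a) => toGrass (n - k) (nul x.1))
      = GrassSet n (n - k) := by
  have hkn : k ≤ n := by
    have := Matrix.rank_le_card_width a
    rw [Fintype.card_fin] at this
    omega
  ext W
  constructor
  · rintro ⟨x, rfl⟩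
    show Module.finrank ℂ (nul x.1) = n - k
    have hxr : x.1.rank = k := by
      rw [aux_rank_eq_of_rng_eq (aux_mem_LClass.1 x.2), hak]
    have := aux_rank_add_finrank_nul x.1
    omega
  · intro hW
    have hWf : Module.finrank ℂ (toSubmodule W) = n - k := hW
    have hsum : Module.finrank ℂ (toSubmodule W) + Module.finrank ℂ (rng a) = n := by
      rw [hWf, aux_finrank_rng, hak]
      omega
    obtain ⟨x, hxnul, hxrng⟩ := aux_exists_matrix (toSubmodule W) (rng a) hsum
    refine ⟨⟨x, aux_mem_LClass.2 hxrng.symm⟩, ?_⟩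
    show toGrass (n - k) (nul x) = W
    rw [hxnul]
    rfl

-- L-side openness
set_option maxHeartbeats 1000000 in
lemma aux_L_open {n k : ℕ} (a : Mn n) (hak : a.rank = k)
    (U : Set ↥(LClass Set.univ a)) (hU : IsOpen U) :
    IsOpen (Subtype.val ⁻¹'
      ((fun x : ↥(LClass Set.univ a) => toGrass (n - k) (nul x.1)) '' U) :
        Set ↥(GrassSet n (n - k))) := by
  set Δ := fun x : ↥(LClass Set.univ a) => toGrass (n - k) (nul x.1) with hΔ
  obtain ⟨Uo, hUo, hUeq⟩ := isOpen_induced_iff.1 hU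
  set V : Set (GrassModK n (n - k)) := {W | W ∈ Δ '' U ∨ W ∉ GrassSet n (n - k)} with hV
  have hqV : qmap n (n - k) ⁻¹' V = qmap n (n - k) ⁻¹' (Δ '' U) := by
    ext P
    simp only [Set.mem_preimage, hV, Set.mem_setOf_eq]
    constructor
    · rintro (h | h)
      · exact h
      · exact absurd (aux_qmap_mem_grassSet P) h
    · exact Or.inl
  have hVopen : IsOpen V := by
    rw [aux_isOpen_grass_iff, hqV, isOpen_iff_mem_nhds]
    rintro P₀ hP₀
    obtain ⟨x, hxU, hx⟩ := hP₀
    have hxnul : nul x.1 = rowSpace P₀.1 := hx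
    have hxrng : rng a = rng x.1 := aux_mem_LClass.1 x.2
    have hxrank : x.1.rank = k := by rw [aux_rank_eq_of_rng_eq hxrng, hak]
    have hxUo : x.1 ∈ Uo := by rw [← hUeq] at hxU; exact hxU
    obtain ⟨c, d, hcd⟩ := aux_exists_pivot x.1 hxrank
    set ψ : Matrix (Fin (n - k)) (Fin n) ℂ → Mn n :=
      fun M => (1 - Mᴴ * ((M * Mᴴ)⁻¹ * M)) * x.1 with hψ
    have hPx : P₀.1 * x.1 = 0 := (aux_mul_eq_zero_iff _ _).2 (le_of_eq hxnul.symm)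
    have hPi : (P₀.1ᴴ * ((P₀.1 * P₀.1ᴴ)⁻¹ * P₀.1)) * x.1 = 0 := by
      rw [Matrix.mul_assoc, Matrix.mul_assoc, hPx, Matrix.mul_zero, Matrix.mul_zero]
    have hψP₀ : ψ P₀.1 = x.1 := by
      show (1 - P₀.1ᴴ * ((P₀.1 * P₀.1ᴴ)⁻¹ * P₀.1)) * x.1 = x.1
      rw [Matrix.sub_mul, Matrix.one_mul, hPi, sub_zero]
    have hdet₀ : (P₀.1 * P₀.1ᴴ).det ≠ 0 := (aux_isUnit_det_PPH P₀.1 P₀.2).ne_zero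
    have hcont2 : ContinuousAt
        (fun M : Matrix (Fin (n - k)) (Fin n) ℂ => (M * Mᴴ)⁻¹) P₀.1 := by
      have h1 : ContinuousAt Inv.inv (P₀.1 * P₀.1ᴴ) := by
        apply continuousAt_matrix_inv
        rw [Ring.inverse_eq_inv']
        exact continuousAt_inv₀ hdet₀
      have h2 : ContinuousAt (fun M : Matrix (Fin (n - k)) (Fin n) ℂ => M * Mᴴ) P₀.1 :=
        (continuous_id.matrix_mul continuous_id.matrix_conjTranspose).continuousAt
      exact ContinuousAt.comp (g := Inv.inv) h1 h2
    have hψcont : ContinuousAt ψ P₀.1 := by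
      have h1 : Continuous (fun q : (Matrix (Fin (n - k)) (Fin n) ℂ) ×
          (Matrix (Fin (n - k)) (Fin (n - k)) ℂ) =>
          (1 - q.1ᴴ * (q.2 * q.1)) * x.1) :=
        (continuous_const.sub
          ((continuous_fst.matrix_conjTranspose).matrix_mul
            (continuous_snd.matrix_mul continuous_fst))).matrix_mul continuous_const
      exact ContinuousAt.comp₂ h1.continuousAt continuousAt_id hcont2
    have E0 : ∀ᶠ M in nhds P₀.1, (M * Mᴴ).det ≠ 0 := by
      have hg : Continuous (fun M : Matrix (Fin (n - k)) (Fin n) ℂ => (M * Mᴴ).det) :=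
        (continuous_id.matrix_mul continuous_id.matrix_conjTranspose).matrix_det
      exact hg.continuousAt.eventually_ne hdet₀
    have E1 : ∀ᶠ M in nhds P₀.1, (d * ψ M * c).det ≠ 0 := by
      have hg : Continuous (fun y : Mn n => (d * y * c).det) :=
        ((continuous_const.matrix_mul continuous_id).matrix_mul continuous_const).matrix_det
      have hco : ContinuousAt (fun M => (d * ψ M * c).det) P₀.1 :=
        hg.continuousAt.comp hψcont
      apply hco.eventually_ne
      rw [hψP₀, hcd, Matrix.det_one]
      exact one_ne_zero
    have E2 : ∀ᶠ M in nhds P₀.1, ψ M ∈ Uo := by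
      have : ψ ⁻¹' Uo ∈ nhds P₀.1 :=
        hψcont.preimage_mem_nhds (by rw [hψP₀]; exact hUo.mem_nhds hxUo)
      exact this
    have Esub : ∀ᶠ P : {P : Matrix (Fin (n - k)) (Fin n) ℂ // P.rank = n - k} in nhds P₀,
        ((P.1 * P.1ᴴ).det ≠ 0 ∧ (d * ψ P.1 * c).det ≠ 0 ∧ ψ P.1 ∈ Uo) :=
      (continuous_subtype_val.tendsto P₀).eventually (E0.and (E1.and E2))
    apply Filter.mem_of_superset Esub
    rintro P ⟨hPdet, hPd, hPUo⟩
    set M := P.1 with hM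
    have hrge : k ≤ (ψ M).rank := aux_rank_ge c d (ψ M) hPd
    have hrowle : rowSpace (ψ M) ≤ rowSpace x.1 := aux_rowSpace_mul_le _ _
    have hrle : (ψ M).rank ≤ k := by
      rw [← aux_finrank_rowSpace]
      refine le_trans (Submodule.finrank_mono hrowle) ?_
      rw [aux_finrank_rowSpace, hxrank]
    have hrEq : (ψ M).rank = k := le_antisymm hrle hrge
    have hrngEq : rng (ψ M) = rng x.1 := by
      apply Submodule.eq_of_le_of_finrank_le hrowle
      rw [aux_finrank_rowSpace, aux_finrank_rowSpace, hxrank, hrEq]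
    have hmem : ψ M ∈ LClass Set.univ a := aux_mem_LClass.2 (hxrng.trans hrngEq.symm)
    have hMPi : M * (Mᴴ * ((M * Mᴴ)⁻¹ * M)) = M := by
      rw [← Matrix.mul_assoc, ← Matrix.mul_assoc,
        Matrix.mul_nonsing_inv _ (isUnit_iff_ne_zero.2 hPdet), Matrix.one_mul]
    have hMψ : M * ψ M = 0 := by
      show M * ((1 - Mᴴ * ((M * Mᴴ)⁻¹ * M)) * x.1) = 0
      rw [← Matrix.mul_assoc, Matrix.mul_sub, Matrix.mul_one, hMPi, sub_self, Matrix.zero_mul]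
    have hnle : rowSpace M ≤ nul (ψ M) := (aux_mul_eq_zero_iff _ _).1 hMψ
    have hnulfin : Module.finrank ℂ (nul (ψ M)) = n - k := by
      have := aux_rank_add_finrank_nul (ψ M)
      omega
    have hnulEq : rowSpace M = nul (ψ M) := by
      apply Submodule.eq_of_le_of_finrank_le hnle
      rw [aux_finrank_rowSpace, hnulfin, P.2]
    refine ⟨⟨ψ M, hmem⟩, ?_, ?_⟩
    · rw [← hUeq]
      exact hPUo
    · show toGrass (n - k) (nul (ψ M)) = toGrass (n - k) (rowSpace M)
      rw [← hnulEq]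
  have hpre : (Subtype.val ⁻¹' (Δ '' U) : Set ↥(GrassSet n (n - k))) = Subtype.val ⁻¹' V := by
    ext W
    simp only [Set.mem_preimage, hV, Set.mem_setOf_eq]
    constructor
    · exact Or.inl
    · rintro (h | h)
      · exact h
      · exact absurd W.2 h
  rw [hpre]
  exact hVopen.preimage continuous_subtype_val

end AuxProofs

/-- For `a ∈ Mn n` of rank `k` (`1 ≤ k ≤ n - 1`), the restriction of
`Γ_k : x ↦ rng x` to the Green class `R_a` of `Mn n` is a continuous open surjection
onto `𝖦_k`, and the restriction of `Δ_k : x ↦ nul x` to `L_a` is a continuous open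
surjection onto `𝖦_{n-k}`. -/
theorem stmt_9 {n k : ℕ} (hk1 : 1 ≤ k) (hk2 : k ≤ n - 1)
    (a : Mn n) (hak : a.rank = k) :
    (Continuous (fun x : ↥(RClass Set.univ a) => toGrass k (rng x.1)) ∧
     Set.range (fun x : ↥(RClass Set.univ a) => toGrass k (rng x.1)) = GrassSet n k ∧
     ∀ U : Set ↥(RClass Set.univ a), IsOpen U →
       IsOpen (Subtype.val ⁻¹'
         ((fun x : ↥(RClass Set.univ a) => toGrass k (rng x.1)) '' U) :
           Set ↥(GrassSet n k))) ∧
    (Continuous (fun x : ↥(LClass Set.univ a) => toGrass (n - k) (nul x.1)) ∧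
     Set.range (fun x : ↥(LClass Set.univ a) => toGrass (n - k) (nul x.1))
       = GrassSet n (n - k) ∧
     ∀ U : Set ↥(LClass Set.univ a), IsOpen U →
       IsOpen (Subtype.val ⁻¹'
         ((fun x : ↥(LClass Set.univ a) => toGrass (n - k) (nul x.1)) '' U) :
           Set ↥(GrassSet n (n - k)))) :=
  ⟨⟨aux_R_continuous a hak, aux_R_range a hak, aux_R_open a hak⟩,
   ⟨aux_L_continuous a hak, aux_L_range a hak, aux_L_open a hak⟩⟩
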